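/- For any probability measure π on 𝒳×{−1,1} and any measurable prediction rule f:𝒳→{−1,1}, the excess hinge risk equals twice the excess Bayes risk: A(f) − A* = 2(R(f) − R*). -/

import Mathlib

open MeasureTheory
open scoped ENNReal NNReal

noncomputable section

namespace AggClass

variable {X : Type*} [MeasurableSpace X]

/-- The sign function, with the convention `sgn 0 = 1`. -/
def sgn (t : ℝ) : ℝ := if 0 ≤ t then 1 else -1

/-- The Bayes rule `f*(x) = sign (2 η x - 1)`. -/
def bayes (η : X → ℝ) : X → ℝ := fun x => sgn (2 * η x - 1)

/-- The hinge risk `A(f) = E[max (1 - Y f(X)) 0]`, as an extended nonnegative real. -/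
def hingeRiskE (π : Measure (X × ℝ)) (f : X → ℝ) : ℝ≥0∞ :=
  ∫⁻ p, ENNReal.ofReal (max (1 - p.2 * f p.1) 0) ∂π

/-- The optimal hinge risk `A* = inf {A(f) : f : X → ℝ measurable}`. -/
def optHingeRiskE (π : Measure (X × ℝ)) : ℝ≥0∞ :=
  ⨅ (f : X → ℝ) (_ : Measurable f), hingeRiskE π f

/-- The hinge risk, real-valued. -/
def hingeRisk (π : Measure (X × ℝ)) (f : X → ℝ) : ℝ := (hingeRiskE π f).toReal

/-- The optimal hinge risk, real-valued. -/
def optHingeRisk (π : Measure (X × ℝ)) : ℝ := (optHingeRiskE π).toReal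

/-- The misclassification risk `R(f) = π (Y ≠ sign (f X))`, ℝ≥0∞-valued. -/
def misRiskE (π : Measure (X × ℝ)) (f : X → ℝ) : ℝ≥0∞ :=
  π {p : X × ℝ | p.2 ≠ sgn (f p.1)}

/-- The misclassification risk, real-valued. -/
def misRisk (π : Measure (X × ℝ)) (f : X → ℝ) : ℝ := (misRiskE π f).toReal

/-- `π` is a joint law of a pair (X,Y) on `X × {-1,1}` with regression function
`η x = π(Y = 1 ∣ X = x)`. -/
structure IsClassif (π : Measure (X × ℝ)) (η : X → ℝ) : Prop where
  labels : π {p : X × ℝ | p.2 = 1 ∨ p.2 = -1}ᶜ = 0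
  meas : Measurable η
  mem01 : ∀ x, η x ∈ Set.Icc (0 : ℝ) 1
  cond : ∀ B : Set X, MeasurableSet B →
    π (B ×ˢ ({1} : Set ℝ)) = ∫⁻ x in B, ENNReal.ofReal (η x) ∂(π.map Prod.fst)

/-- Margin assumption MA(κ) with constant c₀ : for every measurable prediction rule
`f : X → {-1,1}`, `E[|f(X) - f*(X)|] ≤ c₀ (R(f) - R*)^(1/κ)`. -/
def MA (π : Measure (X × ℝ)) (η : X → ℝ) (κ c₀ : ℝ) : Prop :=
  ∀ f : X → ℝ, Measurable f → (∀ x, f x = 1 ∨ f x = -1) →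
    ∫ x, |f x - bayes η x| ∂(π.map Prod.fst)
      ≤ c₀ * (misRisk π f - misRisk π (bayes η)) ^ (1 / κ)

/-- Margin assumption for the hinge risk MAH(κ) with constant c : for every measurable
`f : X → [-1,1]`, `E[|f(X) - f*(X)|] ≤ c (A(f) - A*)^(1/κ)`. -/
def MAH (π : Measure (X × ℝ)) (η : X → ℝ) (κ c : ℝ) : Prop :=
  ∀ f : X → ℝ, Measurable f → (∀ x, f x ∈ Set.Icc (-1 : ℝ) 1) →
    ∫ x, |f x - bayes η x| ∂(π.map Prod.fst)
      ≤ c * (hingeRisk π f - optHingeRisk π) ^ (1 / κ)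

/-- Convex combination of f₁,…,f_M with weights w. -/
def convComb {M : ℕ} (f : Fin M → X → ℝ) (w : Fin M → ℝ) : X → ℝ :=
  fun x => ∑ j, w j * f j x

/-- The set of hinge risks of the elements of the convex hull of f₁,…,f_M. -/
def convRiskSet (π : Measure (X × ℝ)) {M : ℕ} (f : Fin M → X → ℝ) : Set ℝ :=
  {a | ∃ w : Fin M → ℝ, (∀ j, 0 ≤ w j) ∧ (∑ j, w j) = 1 ∧ a = hingeRisk π (convComb f w)}

/-- The law of an i.i.d. sample of size n from π. -/
def sample {α : Type*} [MeasurableSpace α] (π : Measure α) [SigmaFinite π] (n : ℕ) :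
    Measure (Fin n → α) :=
  Measure.pi fun _ => π

/-- The empirical hinge risk on the sample D. -/
def empHinge {n : ℕ} (D : Fin n → X × ℝ) (f : X → ℝ) : ℝ :=
  (n : ℝ)⁻¹ * ∑ i, max (1 - (D i).2 * f (D i).1) 0

/-- The empirical misclassification risk on the sample D. -/
def empMis {n : ℕ} (D : Fin n → X × ℝ) (f : X → ℝ) : ℝ :=
  (n : ℝ)⁻¹ * ∑ i, if (D i).2 ≠ f (D i).1 then (1 : ℝ) else 0

/-- The set of indices minimizing the empirical hinge risk. -/
def ermSet {n M : ℕ} (f : Fin M → X → ℝ) (D : Fin n → X × ℝ) : Finset (Fin M) :=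
  Finset.univ.filter fun j => ∀ k, empHinge D (f j) ≤ empHinge D (f k)

/-- `tf` is an empirical risk minimization (ERM) aggregate for the hinge loss. -/
def IsERM {n M : ℕ} (f : Fin M → X → ℝ) (tf : (Fin n → X × ℝ) → X → ℝ) : Prop :=
  ∀ D, ∃ j ∈ ermSet f D, tf D = f j

/-- `tf` is the averaged ERM (AERM) aggregate for the hinge loss. -/
def IsAERM {n M : ℕ} (f : Fin M → X → ℝ) (tf : (Fin n → X × ℝ) → X → ℝ) : Prop :=
  ∀ D, tf D = fun x => ((ermSet f D).card : ℝ)⁻¹ * ∑ j ∈ ermSet f D, f j x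

/-- The exponential weights for the hinge loss. -/
def aewWeight {n M : ℕ} (f : Fin M → X → ℝ) (D : Fin n → X × ℝ) (j : Fin M) : ℝ :=
  Real.exp (-(n : ℝ) * empHinge D (f j)) / ∑ k, Real.exp (-(n : ℝ) * empHinge D (f k))

/-- `tf` is the aggregation-with-exponential-weights (AEW) aggregate for the hinge loss. -/
def IsAEW {n M : ℕ} (f : Fin M → X → ℝ) (tf : (Fin n → X × ℝ) → X → ℝ) : Prop :=
  ∀ D, tf D = fun x => ∑ j, aewWeight f D j * f j x

/-- Empirical hinge risk on the first k observations of the sample D. -/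
def empHingeK {n : ℕ} (D : Fin n → X × ℝ) (k : ℕ) (f : X → ℝ) : ℝ :=
  (k : ℝ)⁻¹ * ∑ i ∈ Finset.univ.filter (fun i : Fin n => (i : ℕ) < k),
    max (1 - (D i).2 * f (D i).1) 0

/-- The cumulative exponential weights for the hinge loss. -/
def caewWeight {n M : ℕ} (f : Fin M → X → ℝ) (D : Fin n → X × ℝ) (j : Fin M) : ℝ :=
  (n : ℝ)⁻¹ * ∑ k ∈ Finset.Icc 1 n,
    Real.exp (-(k : ℝ) * empHingeK D k (f j)) /
      ∑ l, Real.exp (-(k : ℝ) * empHingeK D k (f l))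

-- ### auxiliary lemmas

lemma sgn_measurable : Measurable sgn := by
  unfold sgn
  exact Measurable.ite measurableSet_Ici measurable_const measurable_const

lemma bayes_measurable {η : X → ℝ} (hη : Measurable η) : Measurable (bayes η) :=
  sgn_measurable.comp ((measurable_const.mul hη).sub measurable_const)

lemma bayes_val (η : X → ℝ) (x : X) : bayes η x = 1 ∨ bayes η x = -1 := by
  unfold bayes sgn; split <;> simp

lemma ae_labels (π : Measure (X × ℝ)) {η : X → ℝ} (hπ : IsClassif π η) :
    ∀ᵐ p : X × ℝ ∂π, p.2 = 1 ∨ p.2 = -1 := by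
  rw [ae_iff]
  have h : {p : X × ℝ | ¬(p.2 = 1 ∨ p.2 = -1)} = {p : X × ℝ | p.2 = 1 ∨ p.2 = -1}ᶜ := rfl
  rw [h]; exact hπ.labels

lemma restrict_one (π : Measure (X × ℝ)) [IsProbabilityMeasure π] {η : X → ℝ}
    (hπ : IsClassif π η) :
    (π.restrict {p : X × ℝ | p.2 = 1}).map Prod.fst
      = (π.map Prod.fst).withDensity (fun x => ENNReal.ofReal (η x)) := by
  ext B hB
  rw [Measure.map_apply measurable_fst hB,
    Measure.restrict_apply (hB.preimage measurable_fst),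
    withDensity_apply _ hB, ← hπ.cond B hB]
  congr 1

lemma restrict_neg_one (π : Measure (X × ℝ)) [IsProbabilityMeasure π] {η : X → ℝ}
    (hπ : IsClassif π η) :
    (π.restrict {p : X × ℝ | p.2 = -1}).map Prod.fst
      = (π.map Prod.fst).withDensity (fun x => ENNReal.ofReal (1 - η x)) := by
  ext B hB
  rw [Measure.map_apply measurable_fst hB,
    Measure.restrict_apply (hB.preimage measurable_fst),
    withDensity_apply _ hB]
  have hfin : π (B ×ˢ ({1} : Set ℝ)) ≠ ⊤ := measure_ne_top π _
  refine (ENNReal.add_left_inj hfin).1 ?_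
  have h1 : Prod.fst ⁻¹' B ∩ {p : X × ℝ | p.2 = -1} ∪ (B ×ˢ ({1} : Set ℝ))
      = Prod.fst ⁻¹' B ∩ {p : X × ℝ | p.2 = 1 ∨ p.2 = -1} := by
    ext p
    simp only [Set.mem_union, Set.mem_inter_iff, Set.mem_preimage, Set.mem_setOf_eq,
      Set.mem_prod, Set.mem_singleton_iff]
    constructor
    · rintro (⟨hB', h2⟩ | ⟨hB', h2⟩)
      · exact ⟨hB', Or.inr h2⟩
      · exact ⟨hB', Or.inl h2⟩
    · rintro ⟨hB', (h2 | h2)⟩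
      · exact Or.inr ⟨hB', h2⟩
      · exact Or.inl ⟨hB', h2⟩
  have hdisj : Disjoint (Prod.fst ⁻¹' B ∩ {p : X × ℝ | p.2 = -1}) (B ×ˢ ({1} : Set ℝ)) := by
    rw [Set.disjoint_left]
    rintro p ⟨-, hp2⟩ hq
    simp only [Set.mem_setOf_eq] at hp2
    have : p.2 = 1 := hq.2
    norm_num [this] at hp2
  have hmeasB1 : π (Prod.fst ⁻¹' B ∩ {p : X × ℝ | p.2 = 1 ∨ p.2 = -1}) = π (Prod.fst ⁻¹' B) := by
    apply le_antisymm (measure_mono Set.inter_subset_left)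
    calc π (Prod.fst ⁻¹' B)
        ≤ π (Prod.fst ⁻¹' B ∩ {p : X × ℝ | p.2 = 1 ∨ p.2 = -1})
          + π {p : X × ℝ | p.2 = 1 ∨ p.2 = -1}ᶜ := by
          refine le_trans (measure_mono ?_) (measure_union_le _ _)
          intro p hp
          by_cases h : p.2 = 1 ∨ p.2 = -1
          · exact Or.inl ⟨hp, h⟩
          · exact Or.inr h
      _ = π (Prod.fst ⁻¹' B ∩ {p : X × ℝ | p.2 = 1 ∨ p.2 = -1}) := by rw [hπ.labels, add_zero]
  have hunion : π (Prod.fst ⁻¹' B ∩ {p : X × ℝ | p.2 = -1}) + π (B ×ˢ ({1} : Set ℝ))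
      = π (Prod.fst ⁻¹' B) := by
    rw [← measure_union hdisj (hB.prod (measurableSet_singleton _)), h1, hmeasB1]
  rw [hunion, hπ.cond B hB]
  have : ∀ x : X, ENNReal.ofReal (1 - η x) + ENNReal.ofReal (η x) = 1 := by
    intro x
    obtain ⟨h0, h1'⟩ := hπ.mem01 x
    rw [← ENNReal.ofReal_add (by linarith) h0]
    norm_num
  rw [← lintegral_add_right _ hπ.meas.ennreal_ofReal]
  simp only [this]
  rw [setLIntegral_const, one_mul, Measure.map_apply measurable_fst hB]

/-- Decomposition of a lintegral over π in terms of η. -/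
lemma lintegral_decomp (π : Measure (X × ℝ)) [IsProbabilityMeasure π] {η : X → ℝ}
    (hπ : IsClassif π η) (G : X × ℝ → ℝ≥0∞) (hG : Measurable G) :
    ∫⁻ p, G p ∂π
      = ∫⁻ x, ENNReal.ofReal (η x) * G (x, 1)
          + ENNReal.ofReal (1 - η x) * G (x, -1) ∂(π.map Prod.fst) := by
  have hS1 : MeasurableSet {p : X × ℝ | p.2 = 1} :=
    measurable_snd (measurableSet_singleton 1)
  have hS2 : MeasurableSet {p : X × ℝ | p.2 = -1} :=
    measurable_snd (measurableSet_singleton (-1))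
  have hdisj : Disjoint {p : X × ℝ | p.2 = 1} {p : X × ℝ | p.2 = -1} := by
    rw [Set.disjoint_left]; intro p h1 h2
    simp only [Set.mem_setOf_eq] at h1 h2; norm_num [h1] at h2
  have hcompl : π ({p : X × ℝ | p.2 = 1} ∪ {p : X × ℝ | p.2 = -1})ᶜ = 0 := by
    have h : {p : X × ℝ | p.2 = 1} ∪ {p : X × ℝ | p.2 = -1}
        = {p : X × ℝ | p.2 = 1 ∨ p.2 = -1} := by ext p; simp
    rw [h]; exact hπ.labels
  have hsplit : ∫⁻ p, G p ∂π
      = ∫⁻ p in {p : X × ℝ | p.2 = 1}, G p ∂π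
        + ∫⁻ p in {p : X × ℝ | p.2 = -1}, G p ∂π := by
    rw [← lintegral_add_compl G (hS1.union hS2),
      setLIntegral_measure_zero _ _ hcompl, add_zero, lintegral_union hS2 hdisj]
  have hG1 : Measurable fun x : X => G (x, 1) := hG.comp (measurable_id.prodMk measurable_const)
  have hG2 : Measurable fun x : X => G (x, -1) := hG.comp (measurable_id.prodMk measurable_const)
  have e1 : ∫⁻ p in {p : X × ℝ | p.2 = 1}, G p ∂π
      = ∫⁻ x, ENNReal.ofReal (η x) * G (x, 1) ∂(π.map Prod.fst) := by
    rw [setLIntegral_congr_fun hS1 (fun p hp => by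
      simp only [Set.mem_setOf_eq] at hp
      show G p = G (p.1, 1)
      rw [show ((p.1 : X), (1 : ℝ)) = p from Prod.ext rfl hp.symm])
      (g := fun p => G (p.1, 1))]
    rw [← lintegral_map hG1 measurable_fst, restrict_one π hπ,
      lintegral_withDensity_eq_lintegral_mul _ hπ.meas.ennreal_ofReal hG1]
    rfl
  have e2 : ∫⁻ p in {p : X × ℝ | p.2 = -1}, G p ∂π
      = ∫⁻ x, ENNReal.ofReal (1 - η x) * G (x, -1) ∂(π.map Prod.fst) := by
    rw [setLIntegral_congr_fun hS2 (fun p hp => by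
      simp only [Set.mem_setOf_eq] at hp
      show G p = G (p.1, -1)
      rw [show ((p.1 : X), (-1 : ℝ)) = p from Prod.ext rfl hp.symm])
      (g := fun p => G (p.1, -1))]
    rw [← lintegral_map hG2 measurable_fst, restrict_neg_one π hπ,
      lintegral_withDensity_eq_lintegral_mul _ (hπ.meas.const_sub 1).ennreal_ofReal hG2]
    rfl
  rw [hsplit, e1, e2,
    ← lintegral_add_left (show Measurable fun x => ENNReal.ofReal (η x) * G (x, 1) from
      hπ.meas.ennreal_ofReal.mul hG1)]


lemma hinge_repr (π : Measure (X × ℝ)) [IsProbabilityMeasure π] {η : X → ℝ}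
    (hπ : IsClassif π η) {g : X → ℝ} (hg : Measurable g) :
    hingeRiskE π g
      = ∫⁻ x, ENNReal.ofReal (η x) * ENNReal.ofReal (max (1 - g x) 0)
          + ENNReal.ofReal (1 - η x) * ENNReal.ofReal (max (1 + g x) 0) ∂(π.map Prod.fst) := by
  have hG : Measurable fun p : X × ℝ => ENNReal.ofReal (max (1 - p.2 * g p.1) 0) :=
    ((measurable_const.sub (measurable_snd.mul (hg.comp measurable_fst))).max
      measurable_const).ennreal_ofReal
  rw [hingeRiskE, lintegral_decomp π hπ _ hG]
  congr 1
  funext x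
  norm_num

lemma pointwise_min (a t : ℝ) (h0 : 0 ≤ a) (h1 : a ≤ 1) :
    a * max (1 - sgn (2 * a - 1)) 0 + (1 - a) * max (1 + sgn (2 * a - 1)) 0
      ≤ a * max (1 - t) 0 + (1 - a) * max (1 + t) 0 := by
  unfold sgn
  split <;> rename_i h
  · have hL : a * max (1 - 1 : ℝ) 0 + (1 - a) * max (1 + 1 : ℝ) 0 = (1 - a) * 2 := by
      norm_num
    rw [hL]
    rcases le_total t 1 with ht1 | ht1
    · rcases le_total (-1 : ℝ) t with ht2 | ht2
      · rw [max_eq_left (by linarith : (0:ℝ) ≤ 1 - t), max_eq_left (by linarith : (0:ℝ) ≤ 1 + t)]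
        nlinarith
      · rw [max_eq_right (by linarith : 1 + t ≤ (0:ℝ))]
        have : a * (1 - t) ≤ a * max (1 - t) 0 :=
          mul_le_mul_of_nonneg_left (le_max_left _ _) h0
        nlinarith
    · rw [max_eq_right (by linarith : 1 - t ≤ (0:ℝ))]
      have : (1 - a) * (1 + t) ≤ (1 - a) * max (1 + t) 0 :=
        mul_le_mul_of_nonneg_left (le_max_left _ _) (by linarith)
      nlinarith
  · push_neg at h
    have hL : a * max (1 - -1 : ℝ) 0 + (1 - a) * max (1 + -1 : ℝ) 0 = a * 2 := by
      norm_num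
    rw [hL]
    rcases le_total (-1 : ℝ) t with ht2 | ht2
    · rcases le_total t 1 with ht1 | ht1
      · rw [max_eq_left (by linarith : (0:ℝ) ≤ 1 - t), max_eq_left (by linarith : (0:ℝ) ≤ 1 + t)]
        nlinarith
      · rw [max_eq_right (by linarith : 1 - t ≤ (0:ℝ))]
        have : (1 - a) * (1 + t) ≤ (1 - a) * max (1 + t) 0 :=
          mul_le_mul_of_nonneg_left (le_max_left _ _) (by linarith)
        nlinarith
    · rw [max_eq_right (by linarith : 1 + t ≤ (0:ℝ))]
      have : a * (1 - t) ≤ a * max (1 - t) 0 :=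
        mul_le_mul_of_nonneg_left (le_max_left _ _) h0
      nlinarith

lemma comb_eq (a t : ℝ) (h0 : 0 ≤ a) (h1 : a ≤ 1) :
    ENNReal.ofReal a * ENNReal.ofReal (max (1 - t) 0)
        + ENNReal.ofReal (1 - a) * ENNReal.ofReal (max (1 + t) 0)
      = ENNReal.ofReal (a * max (1 - t) 0 + (1 - a) * max (1 + t) 0) := by
  rw [← ENNReal.ofReal_mul h0, ← ENNReal.ofReal_mul (by linarith : (0:ℝ) ≤ 1 - a),
    ← ENNReal.ofReal_add (mul_nonneg h0 (le_max_right _ _))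
      (mul_nonneg (by linarith) (le_max_right _ _))]

lemma opt_eq_bayes (π : Measure (X × ℝ)) [IsProbabilityMeasure π] {η : X → ℝ}
    (hπ : IsClassif π η) :
    optHingeRiskE π = hingeRiskE π (bayes η) := by
  refine le_antisymm (iInf_le_of_le (bayes η) (iInf_le _ (bayes_measurable hπ.meas))) ?_
  refine le_iInf fun g => le_iInf fun hg => ?_
  rw [hinge_repr π hπ (bayes_measurable hπ.meas), hinge_repr π hπ hg]
  refine lintegral_mono fun x => ?_
  obtain ⟨h0, h1⟩ := hπ.mem01 x
  have hb : bayes η x = sgn (2 * η x - 1) := rfl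
  rw [hb, comb_eq _ _ h0 h1, comb_eq _ _ h0 h1]
  exact ENNReal.ofReal_le_ofReal (pointwise_min (η x) (g x) h0 h1)

lemma hinge_eq_two_mis (π : Measure (X × ℝ)) [IsProbabilityMeasure π] {η : X → ℝ}
    (hπ : IsClassif π η) {g : X → ℝ} (hg : Measurable g)
    (hval : ∀ x, g x = 1 ∨ g x = -1) :
    hingeRiskE π g = 2 * misRiskE π g := by
  have hSmeas : MeasurableSet {p : X × ℝ | p.2 ≠ sgn (g p.1)} := by
    have h : MeasurableSet {p : X × ℝ | p.2 = sgn (g p.1)} :=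
      measurableSet_eq_fun measurable_snd ((sgn_measurable.comp hg).comp measurable_fst)
    exact h.compl
  have hae : ∫⁻ p, ENNReal.ofReal (max (1 - p.2 * g p.1) 0) ∂π
      = ∫⁻ p, ({p : X × ℝ | p.2 ≠ sgn (g p.1)}).indicator (fun _ => (2 : ℝ≥0∞)) p ∂π := by
    refine lintegral_congr_ae ?_
    filter_upwards [ae_labels π hπ] with p hp
    rcases hp with h2 | h2 <;> rcases hval p.1 with h1 | h1 <;>
      · simp only [Set.indicator_apply, Set.mem_setOf_eq, h2, h1, sgn]
        norm_num
  rw [hingeRiskE, hae, lintegral_indicator_const hSmeas, misRiskE]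


/-- for a prediction rule f : X → {-1,1}, A(f) - A* = 2 (R(f) - R*). -/
theorem excess_hinge_eq_twice_excess_bayes
    (π : Measure (X × ℝ)) [IsProbabilityMeasure π] (η : X → ℝ)
    (hπ : IsClassif π η) (f : X → ℝ) (hf : Measurable f)
    (hval : ∀ x, f x = 1 ∨ f x = -1) :
    hingeRisk π f - optHingeRisk π = 2 * (misRisk π f - misRisk π (bayes η)) := by
  have h1 := hinge_eq_two_mis π hπ hf hval
  have h2 := hinge_eq_two_mis π hπ (bayes_measurable hπ.meas) (bayes_val η)
  have h3 := opt_eq_bayes π hπ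
  unfold hingeRisk optHingeRisk misRisk
  rw [h3, h1, h2, ENNReal.toReal_mul, ENNReal.toReal_mul]
  norm_num
  ring


end AggClass
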